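/- Let n ≥ 3 and let f be a minimum-weight total 3-rainbow dominating function on P₃ □ P_n that minimizes the number of vertices assigned ∅. Then |f((2,j))| ∈ {0,1} for all j ∈ {0,…,n−1}, and |f((i,0))| = |f((0,j))| = 1 for all i ∈ {0,1,2} and j ∈ {1,…,n−1}. -/

import Mathlib

open Finset

/-- No isolated vertex: every vertex has an in-neighbor or an out-neighbor. -/
def NoIsolated {V : Type*} (Adj : V → V → Prop) : Prop :=
  ∀ v, ∃ u, Adj u v ∨ Adj v u

/-- A `k`-rainbow dominating function on a digraph. -/
def IsKRDF {V : Type*} (k : ℕ) (Adj : V → V → Prop) (f : V → Finset (Fin k)) : Prop :=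
  ∀ v, f v = ∅ → ∀ c : Fin k, ∃ u, Adj u v ∧ c ∈ f u

/-- A total `k`-rainbow dominating function on a digraph. -/
def IsTkRDF {V : Type*} (k : ℕ) (Adj : V → V → Prop) (f : V → Finset (Fin k)) : Prop :=
  IsKRDF k Adj f ∧
    ∀ v, f v ≠ ∅ → ∃ u, u ≠ v ∧ f u ≠ ∅ ∧ (Adj u v ∨ Adj v u)

/-- The `k`-rainbow domination number. -/
noncomputable def krdNum {V : Type*} [Fintype V] (k : ℕ) (Adj : V → V → Prop) : ℕ :=
  sInf {w | ∃ f : V → Finset (Fin k), IsKRDF k Adj f ∧ ∑ v, (f v).card = w}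

/-- The total `k`-rainbow domination number. -/
noncomputable def tkRainbow {V : Type*} [Fintype V] (k : ℕ) (Adj : V → V → Prop) : ℕ :=
  sInf {w | ∃ f : V → Finset (Fin k), IsTkRDF k Adj f ∧ ∑ v, (f v).card = w}

/-- A dominating set of a digraph. -/
def IsDomSet {V : Type*} (Adj : V → V → Prop) (S : Finset V) : Prop :=
  ∀ v, v ∉ S → ∃ u ∈ S, Adj u v

/-- The domination number. -/
noncomputable def domNum {V : Type*} [Fintype V] (Adj : V → V → Prop) : ℕ :=
  sInf {m | ∃ S : Finset V, IsDomSet Adj S ∧ S.card = m}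

/-- A total dominating set of a digraph. -/
def IsTDSet {V : Type*} (Adj : V → V → Prop) (S : Finset V) : Prop :=
  IsDomSet Adj S ∧ ∀ v ∈ S, ∃ u ∈ S, u ≠ v ∧ (Adj u v ∨ Adj v u)

/-- The total domination number. -/
noncomputable def totalDomNum {V : Type*} [Fintype V] (Adj : V → V → Prop) : ℕ :=
  sInf {m | ∃ S : Finset V, IsTDSet Adj S ∧ S.card = m}

/-- The underlying (undirected) simple graph of a digraph. -/
def underlying {V : Type*} (Adj : V → V → Prop) : SimpleGraph V where
  Adj u v := u ≠ v ∧ (Adj u v ∨ Adj v u)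
  symm := ⟨fun u v ⟨h1, h2⟩ => ⟨h1.symm, h2.symm⟩⟩
  loopless := ⟨fun v h => h.1 rfl⟩

/-- Maximum out-degree. -/
noncomputable def maxOutDeg {V : Type*} [Fintype V] (Adj : V → V → Prop) : ℕ :=
  Finset.univ.sup fun v => Nat.card {u | Adj v u}

/-- Maximum in-degree. -/
noncomputable def maxInDeg {V : Type*} [Fintype V] (Adj : V → V → Prop) : ℕ :=
  Finset.univ.sup fun v => Nat.card {u | Adj u v}

/-- The Cartesian product `P_m □ P_n` of two directed paths. -/
def pathProdAdj (m n : ℕ) : Fin m × Fin n → Fin m × Fin n → Prop :=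
  fun p q => (p.1 = q.1 ∧ (p.2 : ℕ) + 1 = (q.2 : ℕ)) ∨
    (p.2 = q.2 ∧ (p.1 : ℕ) + 1 = (q.1 : ℕ))

section Aux

variable {V : Type*} [Fintype V] [DecidableEq V] {Adj : V → V → Prop}

lemma sum_upd (F : V → ℕ) (v : V) (b : ℕ) :
    ∑ x, Function.update F v b x + F v = ∑ x, F x + b := by
  rw [Finset.sum_update_of_mem (Finset.mem_univ v),
    Finset.sum_eq_sum_sdiff_singleton_add (Finset.mem_univ v) F]
  omega

lemma card_upd (f : V → Finset (Fin 3)) (v : V) (s : Finset (Fin 3)) (x : V) :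
    ((Function.update f v s) x).card = Function.update (fun x => (f x).card) v s.card x := by
  by_cases h : x = v
  · subst h; simp
  · simp [Function.update_of_ne h]

lemma sum_card_upd (f : V → Finset (Fin 3)) (v : V) (s : Finset (Fin 3)) :
    ∑ x, ((Function.update f v s) x).card + (f v).card = ∑ x, (f x).card + s.card := by
  have h : ∑ x, ((Function.update f v s) x).card
      = ∑ x, Function.update (fun x => (f x).card) v s.card x :=
    Finset.sum_congr rfl fun x _ => card_upd f v s x
  rw [h]; exact sum_upd _ v _

/-- The master exchange lemma: if `g` is obtained from a doubly-minimal `f` by shrinking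
at `v` and filling some empty out-neighbors of `v`, we get a contradiction. -/
lemma master (hirr : ∀ x, ¬ Adj x x)
    (f g : V → Finset (Fin 3)) (hf : IsTkRDF 3 Adj f)
    (hw : ∀ h : V → Finset (Fin 3), IsTkRDF 3 Adj h →
      ∑ v, (f v).card ≤ ∑ v, (h v).card)
    (he : ∀ h : V → Finset (Fin 3), IsTkRDF 3 Adj h →
      ∑ v, (h v).card = ∑ v, (f v).card →
      (Finset.univ.filter fun v => f v = ∅).card ≤
        (Finset.univ.filter fun v => h v = ∅).card)
    (v : V) (hvne : g v ≠ ∅) (hsub : g v ⊆ f v)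
    (hother : ∀ x, x ≠ v → f x ⊆ g x)
    (hnewfill : ∀ x, f x = ∅ → g x ≠ ∅ → Adj v x)
    (hout : ∀ x, Adj v x → g x ≠ ∅)
    (hsum : ∑ x, (g x).card ≤ ∑ x, (f x).card)
    (hstrict : ∑ x, (g x).card = ∑ x, (f x).card → ∃ w, f w = ∅ ∧ g w ≠ ∅) : False := by
  classical
  have h1 : ∀ x, f x ≠ ∅ → g x ≠ ∅ := by
    intro x hx
    by_cases hxv : x = v
    · subst hxv; exact hvne
    · intro h0
      exact hx (Finset.subset_empty.1 (h0 ▸ hother x hxv))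
  have hg : IsTkRDF 3 Adj g := by
    constructor
    · intro x hx c
      have hfx : f x = ∅ := by
        by_contra hfx; exact h1 x hfx hx
      obtain ⟨u, hu, hcu⟩ := hf.1 x hfx c
      refine ⟨u, hu, ?_⟩
      have huv : u ≠ v := by
        rintro rfl; exact hout x hu hx
      exact hother u huv hcu
    · intro x hx
      by_cases hfx : f x = ∅
      · have hadj := hnewfill x hfx hx
        refine ⟨v, ?_, hvne, Or.inl hadj⟩
        intro h; rw [h] at hadj; exact hirr x hadj
      · obtain ⟨u, huv, hu, hadj⟩ := hf.2 x hfx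
        exact ⟨u, huv, h1 u hu, hadj⟩
  rcases lt_or_eq_of_le hsum with hlt | heq
  · have := hw g hg; omega
  · obtain ⟨w, hwf, hwg⟩ := hstrict heq
    have hsubs : (Finset.univ.filter fun x => g x = ∅) ⊆
        (Finset.univ.filter fun x => f x = ∅) := by
      intro x hx
      simp only [Finset.mem_filter, Finset.mem_univ, true_and] at hx ⊢
      by_contra hfx; exact h1 x hfx hx
    have hss : (Finset.univ.filter fun x => g x = ∅) ⊂
        (Finset.univ.filter fun x => f x = ∅) := by
      refine (Finset.ssubset_iff_of_subset hsubs).2 ⟨w, ?_, ?_⟩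
      · exact Finset.mem_filter.2 ⟨Finset.mem_univ w, hwf⟩
      · simp only [Finset.mem_filter, Finset.mem_univ, true_and]
        exact hwg
    have h2 := Finset.card_lt_card hss
    have h3 := he g hg heq
    omega

/-- Shape 1: pure shrink at a vertex of weight ≥ 2 all of whose out-neighbors are nonempty. -/
lemma shape1 (hirr : ∀ x, ¬ Adj x x)
    (f : V → Finset (Fin 3)) (hf : IsTkRDF 3 Adj f)
    (hw : ∀ h : V → Finset (Fin 3), IsTkRDF 3 Adj h →
      ∑ v, (f v).card ≤ ∑ v, (h v).card)
    (he : ∀ h : V → Finset (Fin 3), IsTkRDF 3 Adj h →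
      ∑ v, (h v).card = ∑ v, (f v).card →
      (Finset.univ.filter fun v => f v = ∅).card ≤
        (Finset.univ.filter fun v => h v = ∅).card)
    (v : V) (hv : 2 ≤ (f v).card)
    (hout : ∀ x, Adj v x → f x ≠ ∅) : False := by
  classical
  obtain ⟨c, hc⟩ := Finset.card_pos.1 (by omega : 0 < (f v).card)
  set g := Function.update f v {c} with hgdef
  have hgv : g v = {c} := Function.update_self v _ f
  have hgx : ∀ x, x ≠ v → g x = f x := fun x hx => Function.update_of_ne hx _ f
  have hsum : ∑ x, (g x).card + (f v).card = ∑ x, (f x).card + 1 := by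
    simpa using sum_card_upd f v {c}
  refine master hirr f g hf hw he v ?_ ?_ ?_ ?_ ?_ (by omega) (by intro h; omega)
  · rw [hgv]; simp
  · rw [hgv]; exact Finset.singleton_subset_iff.2 hc
  · intro x hx; rw [hgx x hx]
  · intro x hfx hgx'
    exfalso
    by_cases hxv : x = v
    · subst hxv; rw [hfx] at hv; simp at hv
    · exact hgx' ((hgx x hxv).trans hfx)
  · intro x hx
    have hxv : x ≠ v := by rintro rfl; exact hirr x hx
    rw [hgx x hxv]; exact hout x hx

/-- Shape 2: shrink at `v` and fill one empty out-neighbor `w`; all other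
out-neighbors of `v` are nonempty. -/
lemma shape2 (hirr : ∀ x, ¬ Adj x x)
    (f : V → Finset (Fin 3)) (hf : IsTkRDF 3 Adj f)
    (hw : ∀ h : V → Finset (Fin 3), IsTkRDF 3 Adj h →
      ∑ v, (f v).card ≤ ∑ v, (h v).card)
    (he : ∀ h : V → Finset (Fin 3), IsTkRDF 3 Adj h →
      ∑ v, (h v).card = ∑ v, (f v).card →
      (Finset.univ.filter fun v => f v = ∅).card ≤
        (Finset.univ.filter fun v => h v = ∅).card)
    (v w : V) (hv : 2 ≤ (f v).card) (hadj : Adj v w) (hwempty : f w = ∅)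
    (hout : ∀ x, Adj v x → x ≠ w → f x ≠ ∅) : False := by
  classical
  obtain ⟨c, hc⟩ := Finset.card_pos.1 (by omega : 0 < (f v).card)
  have hvw : v ≠ w := by
    rintro rfl; rw [hwempty] at hv; simp at hv
  set g := Function.update (Function.update f v {c}) w (f v \ {c}) with hgdef
  have hgv : g v = {c} := by
    rw [hgdef, Function.update_of_ne hvw, Function.update_self]
  have hgw : g w = f v \ {c} := Function.update_self w _ _
  have hgwne : g w ≠ ∅ := by
    rw [hgw]
    have hcs : ({c} : Finset (Fin 3)) ⊆ f v := Finset.singleton_subset_iff.2 hc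
    have := Finset.card_sdiff_of_subset hcs
    intro h0
    rw [h0] at this; simp at this; omega
  have hgx : ∀ x, x ≠ v → x ≠ w → g x = f x := fun x hx hxw => by
    rw [hgdef, Function.update_of_ne hxw, Function.update_of_ne hx]
  have hs1 : ∑ x, (g x).card + ((Function.update f v {c}) w).card
      = ∑ x, ((Function.update f v {c}) x).card + (f v \ {c}).card :=
    sum_card_upd _ w _
  have hs2 : ∑ x, ((Function.update f v {c}) x).card + (f v).card
      = ∑ x, (f x).card + 1 := by simpa using sum_card_upd f v {c}
  have huw : ((Function.update f v {c}) w).card = 0 := by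
    rw [Function.update_of_ne (Ne.symm hvw), hwempty]; rfl
  have hsd : (f v \ {c}).card = (f v).card - 1 := by
    rw [Finset.card_sdiff_of_subset (Finset.singleton_subset_iff.2 hc)]; rfl
  have hsum : ∑ x, (g x).card = ∑ x, (f x).card := by omega
  refine master hirr f g hf hw he v ?_ ?_ ?_ ?_ ?_ (le_of_eq hsum)
    (fun _ => ⟨w, hwempty, hgwne⟩)
  · rw [hgv]; simp
  · rw [hgv]; exact Finset.singleton_subset_iff.2 hc
  · intro x hx
    by_cases hxw : x = w
    · subst hxw; rw [hwempty]; exact Finset.empty_subset _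
    · rw [hgx x hx hxw]
  · intro x hfx hgx'
    by_cases hxw : x = w
    · subst hxw; exact hadj
    · exfalso
      by_cases hxv : x = v
      · subst hxv; rw [hfx] at hv; simp at hv
      · exact hgx' ((hgx x hxv hxw).trans hfx)
  · intro x hx
    by_cases hxw : x = w
    · subst hxw; exact hgwne
    · have hxv : x ≠ v := by rintro rfl; exact hirr x hx
      rw [hgx x hxv hxw]; exact hout x hx hxw

/-- Shape 3: `f v = univ`, two empty out-neighbors `w₁ ≠ w₂`; all other
out-neighbors of `v` are nonempty. -/
lemma shape3 (hirr : ∀ x, ¬ Adj x x)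
    (f : V → Finset (Fin 3)) (hf : IsTkRDF 3 Adj f)
    (hw : ∀ h : V → Finset (Fin 3), IsTkRDF 3 Adj h →
      ∑ v, (f v).card ≤ ∑ v, (h v).card)
    (he : ∀ h : V → Finset (Fin 3), IsTkRDF 3 Adj h →
      ∑ v, (h v).card = ∑ v, (f v).card →
      (Finset.univ.filter fun v => f v = ∅).card ≤
        (Finset.univ.filter fun v => h v = ∅).card)
    (v w₁ w₂ : V) (hv : f v = Finset.univ) (hw12 : w₁ ≠ w₂)
    (hadj1 : Adj v w₁) (hadj2 : Adj v w₂)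
    (hw1 : f w₁ = ∅) (hw2 : f w₂ = ∅)
    (hout : ∀ x, Adj v x → x ≠ w₁ → x ≠ w₂ → f x ≠ ∅) : False := by
  classical
  have hvcard : (f v).card = 3 := by rw [hv]; simp
  have hvw1 : v ≠ w₁ := by rintro rfl; rw [hw1] at hvcard; simp at hvcard
  have hvw2 : v ≠ w₂ := by rintro rfl; rw [hw2] at hvcard; simp at hvcard
  set g := Function.update (Function.update (Function.update f v {0}) w₁ {1}) w₂ {2}
    with hgdef
  have hgv : g v = {0} := by
    rw [hgdef, Function.update_of_ne hvw2, Function.update_of_ne hvw1,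
      Function.update_self]
  have hgw1 : g w₁ = {1} := by
    rw [hgdef, Function.update_of_ne hw12, Function.update_self]
  have hgw2 : g w₂ = {2} := Function.update_self _ _ _
  have hgx : ∀ x, x ≠ v → x ≠ w₁ → x ≠ w₂ → g x = f x := fun x h1 h2 h3 => by
    rw [hgdef, Function.update_of_ne h3, Function.update_of_ne h2,
      Function.update_of_ne h1]
  have hs1 : ∑ x, (g x).card
      + ((Function.update (Function.update f v {0}) w₁ {1}) w₂).card
      = ∑ x, ((Function.update (Function.update f v {0}) w₁ {1}) x).card
      + ({2} : Finset (Fin 3)).card := sum_card_upd _ w₂ _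
  have hs2 : ∑ x, ((Function.update (Function.update f v {0}) w₁ {1}) x).card
      + ((Function.update f v {0}) w₁).card
      = ∑ x, ((Function.update f v {0}) x).card + ({1} : Finset (Fin 3)).card :=
    sum_card_upd _ w₁ _
  have hs3 : ∑ x, ((Function.update f v {0}) x).card + (f v).card
      = ∑ x, (f x).card + ({0} : Finset (Fin 3)).card := sum_card_upd f v _
  have ha : ((Function.update (Function.update f v {0}) w₁ {1}) w₂).card = 0 := by
    rw [Function.update_of_ne (Ne.symm hw12), Function.update_of_ne (Ne.symm hvw2), hw2]
    rfl
  have hb : ((Function.update f v {0}) w₁).card = 0 := by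
    rw [Function.update_of_ne (Ne.symm hvw1), hw1]; rfl
  have hc1 : ({0} : Finset (Fin 3)).card = 1 := rfl
  have hc2 : ({1} : Finset (Fin 3)).card = 1 := rfl
  have hc3 : ({2} : Finset (Fin 3)).card = 1 := rfl
  have hsum : ∑ x, (g x).card = ∑ x, (f x).card := by omega
  refine master hirr f g hf hw he v ?_ ?_ ?_ ?_ ?_ (le_of_eq hsum)
    (fun _ => ⟨w₁, hw1, by rw [hgw1]; simp⟩)
  · rw [hgv]; simp
  · rw [hgv, hv]; exact Finset.subset_univ _
  · intro x hx
    by_cases h2 : x = w₁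
    · subst h2; rw [hw1]; exact Finset.empty_subset _
    by_cases h3 : x = w₂
    · subst h3; rw [hw2]; exact Finset.empty_subset _
    · rw [hgx x hx h2 h3]
  · intro x hfx hgx'
    by_cases h2 : x = w₁
    · subst h2; exact hadj1
    by_cases h3 : x = w₂
    · subst h3; exact hadj2
    · exfalso
      by_cases h1 : x = v
      · subst h1; rw [hfx] at hvcard; simp at hvcard
      · exact hgx' ((hgx x h1 h2 h3).trans hfx)
  · intro x hx
    by_cases h2 : x = w₁
    · subst h2; rw [hgw1]; simp
    by_cases h3 : x = w₂
    · subst h3; rw [hgw2]; simp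
    · have h1 : x ≠ v := by rintro rfl; exact hirr x hx
      rw [hgx x h1 h2 h3]; exact hout x hx h2 h3

end Aux

theorem tr3_P3_Pn_structure (n : ℕ) (hn : 3 ≤ n)
    (f : Fin 3 × Fin n → Finset (Fin 3))
    (hf : IsTkRDF 3 (pathProdAdj 3 n) f)
    (hw : ∀ g : Fin 3 × Fin n → Finset (Fin 3), IsTkRDF 3 (pathProdAdj 3 n) g →
      ∑ v, (f v).card ≤ ∑ v, (g v).card)
    (he : ∀ g : Fin 3 × Fin n → Finset (Fin 3), IsTkRDF 3 (pathProdAdj 3 n) g →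
      ∑ v, (g v).card = ∑ v, (f v).card →
      (Finset.univ.filter fun v => f v = ∅).card ≤
        (Finset.univ.filter fun v => g v = ∅).card) :
    (∀ j : Fin n, (f (2, j)).card ≤ 1) ∧
    (∀ i : Fin 3, (f (i, ⟨0, by omega⟩)).card = 1) ∧
    (∀ j : Fin n, 1 ≤ (j : ℕ) → (f (0, j)).card = 1) := by
  classical
  have hirr : ∀ p : Fin 3 × Fin n, ¬ pathProdAdj 3 n p p := by
    rintro ⟨i, k⟩ (⟨_, h⟩ | ⟨_, h⟩) <;>
      · have hh : (1 : ℕ) = 0 := by omega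
        omega
  -- row 2 : card ≤ 1
  have key2 : ∀ j : Fin n, (f (2, j)).card ≤ 1 := by
    intro j
    by_contra hcard
    push_neg at hcard
    have h2 : 2 ≤ (f (2, j)).card := hcard
    by_cases hj : (j : ℕ) + 1 < n
    · have hadjw : pathProdAdj 3 n (2, j) (2, ⟨(j : ℕ) + 1, hj⟩) := Or.inl ⟨rfl, rfl⟩
      have houtchar : ∀ x, pathProdAdj 3 n (2, j) x → x = (2, ⟨(j : ℕ) + 1, hj⟩) := by
        rintro ⟨i, k⟩ (⟨h1, h2'⟩ | ⟨h1, h2'⟩)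
        · have hk : (j : ℕ) + 1 = (k : ℕ) := h2'
          exact Prod.ext h1.symm (Fin.ext hk.symm)
        · exfalso
          have hi : (2 : ℕ) + 1 = (i : ℕ) := h2'
          have := i.isLt; omega
      by_cases hfw : f (2, ⟨(j : ℕ) + 1, hj⟩) = ∅
      · refine shape2 hirr f hf hw he (2, j) (2, ⟨(j : ℕ) + 1, hj⟩) h2 hadjw hfw ?_
        intro x hx hxw
        exact absurd (houtchar x hx) hxw
      · exact shape1 hirr f hf hw he (2, j) h2
          (fun x hx => (houtchar x hx) ▸ hfw)
    · refine shape1 hirr f hf hw he (2, j) h2 ?_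
      rintro ⟨i, k⟩ (⟨h1, h2'⟩ | ⟨h1, h2'⟩)
      · exfalso
        have hk : (j : ℕ) + 1 = (k : ℕ) := h2'
        have := k.isLt; omega
      · exfalso
        have hi : (2 : ℕ) + 1 = (i : ℕ) := h2'
        have := i.isLt; omega
  -- row 0 : card ≤ 1
  have key0 : ∀ j : Fin n, (f (0, j)).card ≤ 1 := by
    intro j
    by_contra hcard
    push_neg at hcard
    have h2 : 2 ≤ (f (0, j)).card := hcard
    have hadjb : pathProdAdj 3 n (0, j) (1, j) := Or.inr ⟨rfl, rfl⟩
    by_cases hj : (j : ℕ) + 1 < n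
    · have hadja : pathProdAdj 3 n (0, j) (0, ⟨(j : ℕ) + 1, hj⟩) := Or.inl ⟨rfl, rfl⟩
      have hchar : ∀ x, pathProdAdj 3 n (0, j) x →
          x = (0, ⟨(j : ℕ) + 1, hj⟩) ∨ x = (1, j) := by
        rintro ⟨i, k⟩ (⟨h1, h2'⟩ | ⟨h1, h2'⟩)
        · have hk : (j : ℕ) + 1 = (k : ℕ) := h2'
          exact Or.inl (Prod.ext h1.symm (Fin.ext hk.symm))
        · have hi : (0 : ℕ) + 1 = (i : ℕ) := h2'
          refine Or.inr (Prod.ext (Fin.ext ?_) h1.symm)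
          show (i : ℕ) = ((1 : Fin 3) : ℕ)
          omega
      have hinchar : ∀ u, pathProdAdj 3 n u (0, ⟨(j : ℕ) + 1, hj⟩) → u = (0, j) := by
        rintro ⟨i, k⟩ (⟨h1, h2'⟩ | ⟨h1, h2'⟩)
        · have hk : (k : ℕ) + 1 = (j : ℕ) + 1 := h2'
          refine Prod.ext h1 (Fin.ext ?_)
          show (k : ℕ) = (j : ℕ)
          omega
        · exfalso
          have hi : (i : ℕ) + 1 = (0 : ℕ) := h2'
          omega
      by_cases hfa : f (0, ⟨(j : ℕ) + 1, hj⟩) = ∅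
      · by_cases hfb : f (1, j) = ∅
        · have huniv : f (0, j) = Finset.univ := by
            apply Finset.eq_univ_iff_forall.2
            intro c
            obtain ⟨u, hu, hcu⟩ := hf.1 _ hfa c
            rwa [hinchar u hu] at hcu
          refine shape3 hirr f hf hw he (0, j) (0, ⟨(j : ℕ) + 1, hj⟩) (1, j)
            huniv ?_ hadja hadjb hfa hfb ?_
          · intro h
            have h1 := congrArg (fun p => ((p.1 : Fin 3) : ℕ)) h
            simp at h1
          · intro x hx hx1 hx2
            rcases hchar x hx with h | h
            · exact absurd h hx1
            · exact absurd h hx2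
        · refine shape2 hirr f hf hw he (0, j) (0, ⟨(j : ℕ) + 1, hj⟩) h2 hadja hfa ?_
          intro x hx hxa
          rcases hchar x hx with h | h
          · exact absurd h hxa
          · rw [h]; exact hfb
      · by_cases hfb : f (1, j) = ∅
        · refine shape2 hirr f hf hw he (0, j) (1, j) h2 hadjb hfb ?_
          intro x hx hxb
          rcases hchar x hx with h | h
          · rw [h]; exact hfa
          · exact absurd h hxb
        · refine shape1 hirr f hf hw he (0, j) h2 ?_
          intro x hx
          rcases hchar x hx with h | h
          · rw [h]; exact hfa
          · rw [h]; exact hfb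
    · -- last column : only out-neighbor (1, j)
      have hchar : ∀ x, pathProdAdj 3 n (0, j) x → x = (1, j) := by
        rintro ⟨i, k⟩ (⟨h1, h2'⟩ | ⟨h1, h2'⟩)
        · exfalso
          have hk : (j : ℕ) + 1 = (k : ℕ) := h2'
          have := k.isLt; omega
        · have hi : (0 : ℕ) + 1 = (i : ℕ) := h2'
          refine Prod.ext (Fin.ext ?_) h1.symm
          show (i : ℕ) = ((1 : Fin 3) : ℕ)
          omega
      by_cases hfb : f (1, j) = ∅
      · refine shape2 hirr f hf hw he (0, j) (1, j) h2 hadjb hfb ?_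
        intro x hx hxb
        exact absurd (hchar x hx) hxb
      · exact shape1 hirr f hf hw he (0, j) h2 (fun x hx => (hchar x hx) ▸ hfb)
  -- in-neighbor characterizations at column 0
  have h0n : (0 : ℕ) < n := by omega
  have h1n : (1 : ℕ) < n := by omega
  have hin10 : ∀ u, pathProdAdj 3 n u (1, ⟨0, h0n⟩) → u = (0, ⟨0, h0n⟩) := by
    rintro ⟨i, k⟩ (⟨h1, h2'⟩ | ⟨h1, h2'⟩)
    · exfalso
      have hk : (k : ℕ) + 1 = (0 : ℕ) := h2'
      omega
    · have hi : (i : ℕ) + 1 = (1 : ℕ) := h2'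
      refine Prod.ext (Fin.ext ?_) h1
      show (i : ℕ) = ((0 : Fin 3) : ℕ)
      omega
  have hin20 : ∀ u, pathProdAdj 3 n u (2, ⟨0, h0n⟩) → u = (1, ⟨0, h0n⟩) := by
    rintro ⟨i, k⟩ (⟨h1, h2'⟩ | ⟨h1, h2'⟩)
    · exfalso
      have hk : (k : ℕ) + 1 = (0 : ℕ) := h2'
      omega
    · have hi : (i : ℕ) + 1 = (2 : ℕ) := h2'
      refine Prod.ext (Fin.ext ?_) h1
      show (i : ℕ) = ((1 : Fin 3) : ℕ)
      omega
  -- vertex (1,0) : card ≤ 1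
  have key10 : (f (1, ⟨0, h0n⟩)).card ≤ 1 := by
    by_contra hcard
    push_neg at hcard
    have h2 : 2 ≤ (f (1, (⟨0, h0n⟩ : Fin n))).card := hcard
    have hadja : pathProdAdj 3 n (1, ⟨0, h0n⟩) (1, ⟨1, h1n⟩) := Or.inl ⟨rfl, rfl⟩
    have hadjb : pathProdAdj 3 n (1, ⟨0, h0n⟩) (2, ⟨0, h0n⟩) := Or.inr ⟨rfl, rfl⟩
    have hchar : ∀ x, pathProdAdj 3 n (1, ⟨0, h0n⟩) x →
        x = (1, ⟨1, h1n⟩) ∨ x = (2, ⟨0, h0n⟩) := by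
      rintro ⟨i, k⟩ (⟨h1, h2'⟩ | ⟨h1, h2'⟩)
      · have hk : (0 : ℕ) + 1 = (k : ℕ) := h2'
        refine Or.inl (Prod.ext h1.symm (Fin.ext ?_))
        show (k : ℕ) = (1 : ℕ)
        omega
      · have hi : (1 : ℕ) + 1 = (i : ℕ) := h2'
        refine Or.inr (Prod.ext (Fin.ext ?_) h1.symm)
        show (i : ℕ) = ((2 : Fin 3) : ℕ)
        omega
    by_cases hfa : f (1, ⟨1, h1n⟩) = ∅
    · by_cases hfb : f (2, ⟨0, h0n⟩) = ∅
      · have huniv : f (1, (⟨0, h0n⟩ : Fin n)) = Finset.univ := by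
          apply Finset.eq_univ_iff_forall.2
          intro c
          obtain ⟨u, hu, hcu⟩ := hf.1 _ hfb c
          rwa [hin20 u hu] at hcu
        refine shape3 hirr f hf hw he (1, ⟨0, h0n⟩) (1, ⟨1, h1n⟩) (2, ⟨0, h0n⟩)
          huniv ?_ hadja hadjb hfa hfb ?_
        · intro h
          have h1 := congrArg (fun p => ((p.1 : Fin 3) : ℕ)) h
          simp at h1
        · intro x hx hx1 hx2
          rcases hchar x hx with h | h
          · exact absurd h hx1
          · exact absurd h hx2
      · refine shape2 hirr f hf hw he (1, ⟨0, h0n⟩) (1, ⟨1, h1n⟩) h2 hadja hfa ?_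
        intro x hx hxa
        rcases hchar x hx with h | h
        · exact absurd h hxa
        · rw [h]; exact hfb
    · by_cases hfb : f (2, ⟨0, h0n⟩) = ∅
      · refine shape2 hirr f hf hw he (1, ⟨0, h0n⟩) (2, ⟨0, h0n⟩) h2 hadjb hfb ?_
        intro x hx hxb
        rcases hchar x hx with h | h
        · rw [h]; exact hfa
        · exact absurd h hxb
      · refine shape1 hirr f hf hw he (1, ⟨0, h0n⟩) h2 ?_
        intro x hx
        rcases hchar x hx with h | h
        · rw [h]; exact hfa
        · rw [h]; exact hfb
  -- forced-universal lemma
  have forced : ∀ (w u : Fin 3 × Fin n), f w = ∅ →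
      (∀ x, pathProdAdj 3 n x w → x = u) → f u = Finset.univ := by
    intro w u hwE hchar
    apply Finset.eq_univ_iff_forall.2
    intro c
    obtain ⟨x, hx, hcx⟩ := hf.1 w hwE c
    rwa [hchar x hx] at hcx
  -- nonemptiness
  have hne00 : f (0, (⟨0, h0n⟩ : Fin n)) ≠ ∅ := by
    intro h
    obtain ⟨u, hu, _⟩ := hf.1 (0, ⟨0, h0n⟩) h 0
    obtain ⟨i, k⟩ := u
    rcases hu with ⟨h1, h2'⟩ | ⟨h1, h2'⟩
    · have hk : (k : ℕ) + 1 = (0 : ℕ) := h2'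
      omega
    · have hi : (i : ℕ) + 1 = (0 : ℕ) := h2'
      omega
  have hne10 : f (1, (⟨0, h0n⟩ : Fin n)) ≠ ∅ := by
    intro h
    have hu := forced _ _ h hin10
    have hk := key0 ⟨0, h0n⟩
    rw [hu] at hk; simp at hk
  have hne20 : f (2, (⟨0, h0n⟩ : Fin n)) ≠ ∅ := by
    intro h
    have hu := forced _ _ h hin20
    have hk := key10
    rw [hu] at hk; simp at hk
  have hne0j : ∀ j : Fin n, 1 ≤ (j : ℕ) → f (0, j) ≠ ∅ := by
    intro j hj h
    have hj1 : (j : ℕ) - 1 < n := by have := j.isLt; omega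
    have hinch : ∀ x, pathProdAdj 3 n x (0, j) → x = (0, ⟨(j : ℕ) - 1, hj1⟩) := by
      rintro ⟨i, k⟩ (⟨h1, h2'⟩ | ⟨h1, h2'⟩)
      · have hk : (k : ℕ) + 1 = (j : ℕ) := h2'
        refine Prod.ext h1 (Fin.ext ?_)
        show (k : ℕ) = (j : ℕ) - 1
        omega
      · exfalso
        have hi : (i : ℕ) + 1 = (0 : ℕ) := h2'
        omega
    have hu := forced _ _ h hinch
    have hk := key0 ⟨(j : ℕ) - 1, hj1⟩
    rw [hu] at hk; simp at hk
  -- conclusion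
  have cardone : ∀ v : Fin 3 × Fin n, f v ≠ ∅ → (f v).card ≤ 1 → (f v).card = 1 := by
    intro v hne hle
    have : 0 < (f v).card := Finset.card_pos.2 (Finset.nonempty_iff_ne_empty.2 hne)
    omega
  refine ⟨key2, ?_, ?_⟩
  · intro i
    fin_cases i
    · exact cardone _ hne00 (key0 _)
    · exact cardone _ hne10 key10
    · exact cardone _ hne20 (key2 _)
  · intro j hj
    exact cardone _ (hne0j j hj) (key0 j)
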